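/- For β > 1, define ξ(κ) = -β·H(1/β)·κ + H(κ) for κ ∈ [0, 1/β], where H is the binary entropy function. Then the maximum of ξ over [0, 1/β] equals ln(1 + exp(-β·H(1/β))). -/

import Mathlib

noncomputable def binEnt (x : ℝ) : ℝ := -x * Real.log x - (1 - x) * Real.log (1 - x)

open Real in
lemma gibbs {κ q : ℝ} (hκ0 : 0 ≤ κ) (hκ1 : κ < 1) (hq0 : 0 < q) (hq1 : q < 1) :
    -κ * log κ - (1 - κ) * log (1 - κ) ≤ -κ * log q - (1 - κ) * log (1 - q) := by
  rcases eq_or_lt_of_le hκ0 with h0 | h0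
  · simp [← h0]
    have := Real.log_nonpos (by linarith : (0:ℝ) ≤ 1 - q) (by linarith : 1 - q ≤ 1)
    linarith
  · have h1 : log (q / κ) ≤ q / κ - 1 := Real.log_le_sub_one_of_pos (by positivity)
    have h1κ : (0:ℝ) < 1 - κ := by linarith
    have h2 : log ((1 - q) / (1 - κ)) ≤ (1 - q) / (1 - κ) - 1 :=
      Real.log_le_sub_one_of_pos (div_pos (by linarith) h1κ)
    rw [Real.log_div (ne_of_gt hq0) (ne_of_gt h0)] at h1
    rw [Real.log_div (by linarith) (ne_of_gt h1κ)] at h2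
    have e1 : κ * (log q - log κ) ≤ q - κ := by
      calc κ * (log q - log κ) ≤ κ * (q / κ - 1) :=
            mul_le_mul_of_nonneg_left h1 hκ0
        _ = q - κ := by field_simp
    have e2 : (1 - κ) * (log (1 - q) - log (1 - κ)) ≤ (1 - q) - (1 - κ) := by
      calc (1 - κ) * (log (1 - q) - log (1 - κ)) ≤ (1 - κ) * ((1 - q) / (1 - κ) - 1) :=
            mul_le_mul_of_nonneg_left h2 h1κ.le
        _ = (1 - q) - (1 - κ) := by field_simp
    nlinarith

theorem stmt11 (β : ℝ) (hβ : 1 < β) :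
    IsGreatest ((fun κ : ℝ => -β * binEnt (1 / β) * κ + binEnt κ) '' Set.Icc 0 (1 / β))
      (Real.log (1 + Real.exp (-β * binEnt (1 / β)))) := by
  have hβ0 : (0:ℝ) < β := by linarith
  have hβ1 : (0:ℝ) < β - 1 := by linarith
  set c : ℝ := β * binEnt (1 / β) with hc
  have hcc : -β * binEnt (1 / β) = -c := by rw [hc]; ring
  set E : ℝ := Real.exp (-c) with hE
  have hE0 : 0 < E := Real.exp_pos _
  set L : ℝ := Real.log (1 + E) with hL
  have h1β1 : 1 / β < 1 := by rw [div_lt_one hβ0]; exact hβ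
  have hcval : c = Real.log β + (β - 1) * (Real.log β - Real.log (β - 1)) := by
    rw [hc, binEnt]
    have h1 : Real.log (1 / β) = -Real.log β := by rw [one_div, Real.log_inv]
    have h2 : (1:ℝ) - 1 / β = (β - 1) / β := by field_simp
    rw [h1, h2, Real.log_div (ne_of_gt hβ1) (ne_of_gt hβ0)]
    field_simp
    ring
  have hlog_le : Real.log (β - 1) ≤ Real.log β :=
    Real.log_le_log hβ1 (by linarith)
  have hc_ge : Real.log β ≤ c := by rw [hcval]; nlinarith
  have hEc : β ≤ Real.exp c := by
    calc β = Real.exp (Real.log β) := (Real.exp_log hβ0).symm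
      _ ≤ Real.exp c := Real.exp_le_exp.mpr hc_ge
  set q : ℝ := E / (1 + E) with hq
  have h1E : (0:ℝ) < 1 + E := by linarith
  have hq0 : 0 < q := div_pos hE0 h1E
  have hq1 : q < 1 := by rw [hq, div_lt_one h1E]; linarith
  have hβE : β * E ≤ 1 := by
    have := mul_le_mul_of_nonneg_right hEc hE0.le
    have hEE : Real.exp c * E = 1 := by rw [hE, ← Real.exp_add]; simp
    linarith
  have hq_le : q ≤ 1 / β := by
    rw [hq, div_le_div_iff₀ h1E hβ0]
    nlinarith
  have h1q : (1:ℝ) - q = 1 / (1 + E) := by rw [hq]; field_simp; ring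
  have hlogq : Real.log q = -c - L := by
    rw [hq, Real.log_div (ne_of_gt hE0) (ne_of_gt h1E), hE, Real.log_exp, hL]
  have hlog1q : Real.log (1 - q) = -L := by
    rw [h1q, one_div, Real.log_inv, hL]
  constructor
  · refine ⟨q, ⟨hq0.le, hq_le⟩, ?_⟩
    show -β * binEnt (1 / β) * q + binEnt q = Real.log (1 + Real.exp (-β * binEnt (1 / β)))
    rw [hcc, ← hE, ← hL, binEnt, hlogq, hlog1q]
    ring
  · rintro y ⟨κ, ⟨hκ0, hκβ⟩, rfl⟩
    have hκ1 : κ < 1 := lt_of_le_of_lt hκβ h1β1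
    have hg := gibbs hκ0 hκ1 hq0 hq1
    show -β * binEnt (1 / β) * κ + binEnt κ ≤ Real.log (1 + Real.exp (-β * binEnt (1 / β)))
    rw [hcc, ← hE, ← hL, binEnt]
    calc -c * κ + (-κ * Real.log κ - (1 - κ) * Real.log (1 - κ))
        ≤ -c * κ + (-κ * Real.log q - (1 - κ) * Real.log (1 - q)) := by linarith
      _ = L := by rw [hlogq, hlog1q]; ring
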